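/- Let n = 2k−1 be odd, and let λ be a maximal unrefinable partition of T_n = n(n+1)/2 with largest part 2n−4, n−2 parts, n−2 missing parts, satisfying the complement property (x ∈ λ iff 2n−4−x ∉ λ for x ≠ n−2, and n−2 ∉ λ). In the associated Young diagram Y = KN(S_λ), let z be the index with h_{1,z+1} = n−2. Then the sum of the hook lengths h_{i,z+1} for 2 ≤ i ≤ z (the entries of the 'extra column' below the first row) equals k. -/

import Mathlib

/-- A partition into distinct parts, encoded as a `Finset ℕ` of its parts, is *refinable*
if some part can be replaced by two or more distinct positive integers, none of which is
already a part, summing to it. -/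
def Refinable (P : Finset ℕ) : Prop :=
  ∃ a ∈ P, ∃ B : Finset ℕ, 2 ≤ B.card ∧ (∀ b ∈ B, 0 < b ∧ b ∉ P) ∧ B.sum id = a

/-- The `i`-th largest element (0-based) of `P`. -/
def partDesc (P : Finset ℕ) (i : ℕ) : ℕ := ((P.sort (· ≤ ·)).reverse).getD i 0

/-- Length of the `i`-th row (0-based) of the Young diagram obtained from the numerical
set `ℕ \ P` via the Keith–Nath transformation: the number of east steps (elements of the
numerical set) preceding the north step at the `i`-th largest gap. -/
def knRow (P : Finset ℕ) (i : ℕ) : ℕ :=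
  ((Finset.range (partDesc P i)).filter (fun s => s ∉ P)).card

/-- Length of the `j`-th column (0-based) of the Keith–Nath Young diagram. -/
def knCol (P : Finset ℕ) (j : ℕ) : ℕ :=
  ((Finset.range P.card).filter (fun i => j < knRow P i)).card

/-- Hook length of the cell `(i, j)` (0-based) of the Keith–Nath Young diagram:
arm + leg + 1. -/
def knHook (P : Finset ℕ) (i j : ℕ) : ℕ := knRow P i + knCol P j - i - j - 1

/-- Total number of cells of the Keith–Nath Young diagram. -/
def knCells (P : Finset ℕ) : ℕ := ∑ i ∈ Finset.range P.card, knRow P i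

namespace KNAux

variable (P : Finset ℕ)

lemma list_len : ((P.sort (· ≤ ·)).reverse).length = P.card := by
  rw [List.length_reverse, Finset.length_sort]

lemma list_mem {x : ℕ} : x ∈ (P.sort (· ≤ ·)).reverse ↔ x ∈ P := by
  rw [List.mem_reverse, Finset.mem_sort]

lemma list_sorted : ((P.sort (· ≤ ·)).reverse).Pairwise (· > ·) := by
  rw [List.pairwise_reverse]
  exact (Finset.sortedLT_sort P).pairwise

lemma partDesc_strict {i j : ℕ} (hij : i < j) (hj : j < P.card) :
    partDesc P j < partDesc P i := by
  have hl := list_len P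
  have hj' : j < ((P.sort (· ≤ ·)).reverse).length := by omega
  have hi' : i < ((P.sort (· ≤ ·)).reverse).length := by omega
  have := List.Pairwise.rel_get_of_lt (l := (P.sort (· ≤ ·)).reverse) (list_sorted P)
    (a := ⟨i, hi'⟩) (b := ⟨j, hj'⟩) hij
  simpa only [partDesc, List.getD_eq_getElem _ _ hi', List.getD_eq_getElem _ _ hj',
    List.get_eq_getElem] using this

lemma partDesc_mem {i : ℕ} (hi : i < P.card) : partDesc P i ∈ P := by
  have hl := list_len P
  have hi' : i < ((P.sort (· ≤ ·)).reverse).length := by omega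
  rw [partDesc, List.getD_eq_getElem _ _ hi']
  exact (list_mem P).mp (List.getElem_mem _)

lemma exists_index {p : ℕ} (hp : p ∈ P) : ∃ i, i < P.card ∧ partDesc P i = p := by
  have hl := list_len P
  obtain ⟨i, hi⟩ := List.mem_iff_get.mp ((list_mem P).mpr hp)
  exact ⟨i.1, by omega, by rw [partDesc, List.getD_eq_getElem _ _ i.2]; exact hi⟩

lemma partDesc_inj {i j : ℕ} (hi : i < P.card) (hj : j < P.card)
    (h : partDesc P i = partDesc P j) : i = j := by
  rcases lt_trichotomy i j with h' | h' | h'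
  · have := partDesc_strict P h' hj; omega
  · exact h'
  · have := partDesc_strict P h' hi; omega

lemma sum_transfer (Q : ℕ → Prop) [DecidablePred Q] (g : ℕ → ℕ) :
    ∑ i ∈ (Finset.range P.card).filter (fun i => Q (partDesc P i)), g (partDesc P i)
      = ∑ p ∈ P.filter Q, g p := by
  apply Finset.sum_bij (fun i _ => partDesc P i)
  · intro a ha
    simp only [Finset.mem_filter, Finset.mem_range] at ha ⊢
    exact ⟨partDesc_mem P ha.1, ha.2⟩
  · intro a ha b hb h
    simp only [Finset.mem_filter, Finset.mem_range] at ha hb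
    exact partDesc_inj P ha.1 hb.1 h
  · intro p hp
    simp only [Finset.mem_filter] at hp
    obtain ⟨i, hi, rfl⟩ := exists_index P hp.1
    exact ⟨i, by simp [Finset.mem_filter, Finset.mem_range, hi, hp.2], rfl⟩
  · intros; rfl

lemma card_transfer (Q : ℕ → Prop) [DecidablePred Q] :
    ((Finset.range P.card).filter (fun i => Q (partDesc P i))).card = (P.filter Q).card := by
  have := sum_transfer P Q (fun _ => 1)
  simpa using this

lemma down_eq (S : Finset ℕ) (h : ∀ ⦃i j : ℕ⦄, i ≤ j → j ∈ S → i ∈ S) (i : ℕ) :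
    i ∈ S ↔ i < S.card := by
  constructor
  · intro hi
    have hsub : Finset.range (i + 1) ⊆ S := by
      intro j hj
      exact h (by simpa [Nat.lt_succ_iff] using hj) hi
    have := Finset.card_le_card hsub
    simp only [Finset.card_range] at this; omega
  · intro hi
    by_contra hn
    have hsub : S ⊆ Finset.range i := by
      intro j hj
      rw [Finset.mem_range]
      by_contra h2
      exact hn (h (by omega) hj)
    have := Finset.card_le_card hsub
    simp only [Finset.card_range] at this; omega

lemma threshold (t : ℕ) {i : ℕ} (hi : i < P.card) :
    t < partDesc P i ↔ i < (P.filter (fun p => t < p)).card := by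
  set S := (Finset.range P.card).filter (fun j => t < partDesc P j) with hS
  have hcard : S.card = (P.filter (fun p => t < p)).card := card_transfer P _
  have hdown : ∀ ⦃a b : ℕ⦄, a ≤ b → b ∈ S → a ∈ S := by
    intro a b hab hb
    simp only [hS, Finset.mem_filter, Finset.mem_range] at hb ⊢
    refine ⟨by omega, ?_⟩
    rcases eq_or_lt_of_le hab with rfl | h'
    · exact hb.2
    · have := partDesc_strict P h' hb.1; omega
  have := down_eq S hdown i
  rw [← hcard]
  rw [← this]
  simp [hS, Finset.mem_filter, Finset.mem_range, hi]

end KNAux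


/-- Triangular case, `n = 2k - 1` odd: in the Keith–Nath Young diagram of a maximal
unrefinable partition of `T_n`, the hook lengths of the extra column (column `z`,
0-based, where `h_{0,z} = n - 2`) below the first row sum to `k`. -/


theorem stmt10 (P : Finset ℕ) (n k z : ℕ) (hk : 4 ≤ k) (hn : n = 2 * k - 1)
    (hne : P.Nonempty) (hpos : ∀ p ∈ P, 0 < p) (hunref : ¬ Refinable P)
    (hsum : P.sum id = n * (n + 1) / 2)
    (hmax : P.max' hne = 2 * n - 4) (hcard : P.card = n - 2)
    (hmiss : ((Finset.Icc 1 (P.max' hne)) \ P).card = n - 2)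
    (hnmem : n - 2 ∉ P)
    (hcompl : ∀ x : ℕ, 0 < x → x ≤ 2 * n - 4 → x ≠ n - 2 →
      (x ∈ P ↔ 2 * n - 4 - x ∉ P))
    (hz1 : 1 ≤ z) (hz2 : z ≤ n - 2) (hz : knHook P 0 z = n - 2) :
    ∑ i ∈ Finset.Ico 1 z, knHook P i z = k := by
  classical
  have hn7 : 7 ≤ n := by omega
  set M := 2 * n - 4 with hMdef
  have hPub : ∀ p ∈ P, p ≤ M := fun p hp => hmax ▸ P.le_max' p hp
  have hMP : M ∈ P := hmax ▸ P.max'_mem hne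
  set D := (Finset.Icc 1 (n-3)).filter (fun d => d ∉ P) with hDdef
  set c := D.card with hcdef
  have hDmem : ∀ d ∈ D, 1 ≤ d ∧ d ≤ n - 3 ∧ d ∉ P := by
    intro d hd
    simp only [hDdef, Finset.mem_filter, Finset.mem_Icc] at hd
    exact ⟨hd.1.1, hd.1.2, hd.2⟩
  have hDsub : D ⊆ Finset.Icc 1 (n-3) := Finset.filter_subset _ _
  have hcb : c ≤ n - 3 := by
    have h := Finset.card_le_card hDsub
    rw [Nat.card_Icc] at h
    omega
  have hDP : ∀ d ∈ D, M - d ∈ P := by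
    intro d hd
    obtain ⟨hd1, hd2, hd3⟩ := hDmem d hd
    have h := hcompl (M - d) (by omega) (by omega) (by omega)
    rw [h]
    have h2 : M - (M - d) = d := by omega
    rw [h2]
    simpa using hd3
  -- structure of the parts above n-2
  have hUimg : P.filter (fun p => n - 2 < p) = insert M (D.image (fun d => M - d)) := by
    ext p
    simp only [Finset.mem_filter, Finset.mem_insert, Finset.mem_image]
    constructor
    · rintro ⟨hp, hp2⟩
      have hple := hPub p hp
      rcases eq_or_lt_of_le hple with rfl | hplt
      · exact Or.inl rfl
      · refine Or.inr ⟨M - p, ?_, by omega⟩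
        have h1 : 0 < p := hpos p hp
        have h2 : M - p ∉ P := (hcompl p h1 (by omega) (by omega)).mp hp
        simp only [hDdef, Finset.mem_filter, Finset.mem_Icc]
        exact ⟨⟨by omega, by omega⟩, h2⟩
    · rintro (rfl | ⟨d, hd, rfl⟩)
      · exact ⟨hMP, by omega⟩
      · obtain ⟨hd1, hd2, hd3⟩ := hDmem d hd
        exact ⟨hDP d hd, by omega⟩
  have hMnotimg : M ∉ D.image (fun d => M - d) := by
    simp only [Finset.mem_image, not_exists]
    rintro d ⟨hd, hd2⟩
    obtain ⟨hd3, hd4, _⟩ := hDmem d hd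
    omega
  have hinj : ∀ a ∈ D, ∀ b ∈ D, M - a = M - b → a = b := by
    intro a ha b hb hab
    obtain ⟨_, ha2, _⟩ := hDmem a ha
    obtain ⟨_, hb2, _⟩ := hDmem b hb
    omega
  have himgcard : (D.image (fun d => M - d)).card = c :=
    Finset.card_image_of_injOn (fun a ha b hb h => hinj a ha b hb h)
  have hUcard : (P.filter (fun p => n - 2 < p)).card = c + 1 := by
    rw [hUimg, Finset.card_insert_of_notMem hMnotimg, himgcard]
  -- the parts below n-2
  set IC := (Finset.Icc 1 (n-3)).filter (fun d => d ∈ P) with hICdef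
  have hICeq : IC = Finset.Icc 1 (n-3) \ D := by
    ext q
    simp only [hICdef, hDdef, Finset.mem_filter, Finset.mem_sdiff, Finset.mem_Icc]
    tauto
  have hICcard : IC.card + c = n - 3 := by
    rw [hICeq, Finset.card_sdiff_of_subset hDsub, Nat.card_Icc]
    omega
  -- sum identity
  have hPsplit : P.filter (fun p => ¬ p ≤ n - 3) = P.filter (fun p => n - 2 < p) := by
    apply Finset.filter_congr
    intro p hp
    have hpn : p ≠ n - 2 := fun h => hnmem (h ▸ hp)
    constructor <;> intro h <;> omega
  have hlowEq : P.filter (fun p => p ≤ n - 3) = IC := by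
    ext q
    simp only [hICdef, Finset.mem_filter, Finset.mem_Icc]
    constructor
    · rintro ⟨hq, hq2⟩; exact ⟨⟨hpos q hq, hq2⟩, hq⟩
    · rintro ⟨⟨_, hq2⟩, hq⟩; exact ⟨hq, hq2⟩
  have hT : n * (n + 1) / 2 = k * n := by
    have h1 : n + 1 = 2 * k := by omega
    rw [h1, show n * (2 * k) = k * n * 2 by ring]
    exact Nat.mul_div_cancel _ (by norm_num)
  have hsum' : ∑ p ∈ P, p = k * n := by
    have h1 : P.sum id = k * n := by rw [hsum, hT]
    simpa [id] using h1
  have hsum1 : (∑ p ∈ IC, p) + (∑ p ∈ P.filter (fun p => n - 2 < p), p) = k * n := by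
    rw [← hlowEq, ← hPsplit, Finset.sum_filter_add_sum_filter_not P _ _, hsum']
  have hsum2 : (∑ p ∈ P.filter (fun p => n - 2 < p), p) = M + ∑ d ∈ D, (M - d) := by
    rw [hUimg, Finset.sum_insert hMnotimg, Finset.sum_image hinj]
  set SD := ∑ d ∈ D, d with hSDdef
  set SMD := ∑ d ∈ D, (M - d) with hSMDdef
  have hsum3 : SMD + SD = c * M := by
    rw [hSMDdef, hSDdef, ← Finset.sum_add_distrib]
    rw [Finset.sum_congr rfl (g := fun _ => M) (fun d hd => by
      obtain ⟨_, hd2, _⟩ := hDmem d hd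
      show M - d + d = M
      omega)]
    rw [Finset.sum_const, smul_eq_mul]
  have hsum4 : SD + (∑ p ∈ IC, p) = ∑ x ∈ Finset.Icc 1 (n-3), x := by
    have h := Finset.sum_filter_add_sum_filter_not (Finset.Icc 1 (n-3)) (fun d => d ∈ P) id
    have h2 : (Finset.Icc 1 (n-3)).filter (fun d => ¬ d ∈ P) = D := rfl
    rw [h2, ← hICdef] at h
    simp only [id] at h
    omega
  have hgauss : 2 * (∑ x ∈ Finset.Icc 1 (n-3), x) = (n - 2) * (n - 3) := by
    have h1 : Finset.range (n - 2) = insert 0 (Finset.Icc 1 (n-3)) := by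
      ext x; simp only [Finset.mem_range, Finset.mem_insert, Finset.mem_Icc]; omega
    have h2 := Finset.sum_range_id_mul_two (n - 2)
    rw [h1, Finset.sum_insert (by simp)] at h2
    rw [show n - 2 - 1 = n - 3 by omega] at h2
    omega
  have hnZ : (n : ℤ) = 2 * (k : ℤ) - 1 := by omega
  have hMZ : (M : ℤ) = 4 * (k : ℤ) - 6 := by omega
  have A1z : ((∑ p ∈ IC, p : ℕ) : ℤ) + (M : ℤ) + (SMD : ℤ) = (k : ℤ) * (n : ℤ) := by
    have h := hsum1
    rw [hsum2] at h
    have h2 : (∑ p ∈ IC, p) + M + SMD = k * n := by omega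
    exact_mod_cast h2
  have A2z : (SMD : ℤ) + (SD : ℤ) = (c : ℤ) * (M : ℤ) := by exact_mod_cast hsum3
  have A3z : (SD : ℤ) + ((∑ p ∈ IC, p : ℕ) : ℤ) = ((∑ x ∈ Finset.Icc 1 (n-3), x : ℕ) : ℤ) := by
    exact_mod_cast hsum4
  have A4z : 2 * ((∑ x ∈ Finset.Icc 1 (n-3), x : ℕ) : ℤ) = ((n : ℤ) - 2) * ((n : ℤ) - 3) := by
    have h2 : 2 ≤ n := by omega
    have h3 : 3 ≤ n := by omega
    zify [h2, h3] at hgauss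
    linarith
  have key5 : (SD : ℤ) + (k : ℤ) = (c : ℤ) * (2 * (k : ℤ) - 3) := by
    have goal4 : 4 * ((SD : ℤ) + (k : ℤ)) = 4 * ((c : ℤ) * (2 * (k : ℤ) - 3)) := by
      linear_combination (-2 : ℤ) * A1z + 2 * A2z + 2 * A3z + A4z
        + (2 + 2 * (c : ℤ)) * hMZ + ((n : ℤ) - 6) * hnZ
    linarith
  -- counting non-parts below a given value
  have hfg : ∀ p : ℕ, ((Finset.range p).filter (fun s => s ∉ P)).card
      + ((Finset.range p).filter (fun s => s ∈ P)).card = p := by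
    intro p
    have h1 : (Finset.range p).filter (fun s => s ∉ P)
        = Finset.range p \ (Finset.range p).filter (fun s => s ∈ P) := by
      ext q
      simp only [Finset.mem_filter, Finset.mem_sdiff, Finset.mem_range]
      tauto
    have h2 : (Finset.range p).filter (fun s => s ∈ P) ⊆ Finset.range p :=
      Finset.filter_subset _ _
    have h3 := Finset.card_le_card h2
    rw [h1, Finset.card_sdiff_of_subset h2]
    rw [Finset.card_range] at h3 ⊢
    omega
  -- row 0
  have hcard' : P.card = n - 2 := hcard
  have h0card : 0 < P.card := by omega
  have hfltM : P.filter (fun p => M - 1 < p) = {M} := by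
    ext q
    simp only [Finset.mem_filter, Finset.mem_singleton]
    constructor
    · rintro ⟨hq, hq2⟩
      have := hPub q hq
      omega
    · rintro rfl
      exact ⟨hMP, by omega⟩
  have hpd0 : partDesc P 0 = M := by
    have h1 := (KNAux.threshold P (M - 1) h0card).mpr
    rw [hfltM, Finset.card_singleton] at h1
    have h2 := h1 (by omega)
    have h3 := hPub _ (KNAux.partDesc_mem P h0card)
    omega
  have hgM : ((Finset.range M).filter (fun s => s ∈ P)).card = n - 3 := by
    have h1 : (Finset.range M).filter (fun s => s ∈ P) = P.erase M := by
      ext q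
      simp only [Finset.mem_filter, Finset.mem_range, Finset.mem_erase]
      constructor
      · rintro ⟨hq, hq2⟩; exact ⟨by omega, hq2⟩
      · rintro ⟨hq, hq2⟩
        have := hPub q hq2
        exact ⟨by omega, hq2⟩
    rw [h1, Finset.card_erase_of_mem hMP, hcard']
    omega
  have hrow0 : knRow P 0 = n - 1 := by
    have h1 := hfg M
    rw [hgM] at h1
    rw [knRow, hpd0]
    omega
  -- column z from hz
  have hcolz : knCol P z = z := by
    simp only [knHook, hrow0] at hz
    omega
  -- bounds on non-part counts
  have hfub : ∀ p ∈ P, p ≤ n - 3 → ((Finset.range p).filter (fun s => s ∉ P)).card ≤ c + 1 := by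
    intro p hp hple
    have hsub : (Finset.range p).filter (fun s => s ∉ P) ⊆ insert 0 D := by
      intro q hq
      simp only [Finset.mem_filter, Finset.mem_range] at hq
      simp only [Finset.mem_insert, hDdef, Finset.mem_filter, Finset.mem_Icc]
      rcases Nat.eq_zero_or_pos q with rfl | hq0
      · exact Or.inl rfl
      · exact Or.inr ⟨⟨hq0, by omega⟩, hq.2⟩
    have h1 := Finset.card_le_card hsub
    have h2 := Finset.card_insert_le 0 D
    omega
  have hflb : ∀ p ∈ P, n - 2 < p → c + 2 ≤ ((Finset.range p).filter (fun s => s ∉ P)).card := by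
    intro p hp hplt
    have h0P : (0 : ℕ) ∉ P := fun h => absurd (hpos 0 h) (by omega)
    have h0D : (0 : ℕ) ∉ D := fun h => absurd (hDmem 0 h).1 (by omega)
    have hn2D : (n - 2) ∉ D := fun h => by have := (hDmem _ h).2.1; omega
    have hsub : insert 0 (insert (n - 2) D) ⊆ (Finset.range p).filter (fun s => s ∉ P) := by
      intro q hq
      simp only [Finset.mem_insert] at hq
      simp only [Finset.mem_filter, Finset.mem_range]
      rcases hq with rfl | rfl | hq
      · exact ⟨by omega, h0P⟩
      · exact ⟨by omega, hnmem⟩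
      · obtain ⟨h1, h2, h3⟩ := hDmem q hq
        exact ⟨by omega, h3⟩
    have hcardins : (insert 0 (insert (n - 2) D)).card = c + 2 := by
      rw [Finset.card_insert_of_notMem (by
        simp only [Finset.mem_insert]
        push_neg
        exact ⟨by omega, h0D⟩), Finset.card_insert_of_notMem hn2D]
    calc c + 2 = (insert 0 (insert (n - 2) D)).card := hcardins.symm
      _ ≤ _ := Finset.card_le_card hsub
  -- column c+1
  have hcolgen : ∀ j, knCol P j
      = (P.filter (fun p => j < ((Finset.range p).filter (fun s => s ∉ P)).card)).card := by
    intro j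
    have := KNAux.card_transfer P
      (fun p => j < ((Finset.range p).filter (fun s => s ∉ P)).card)
    exact this
  have hcolc : knCol P (c + 1) = c + 1 := by
    rw [hcolgen]
    have hfeq : P.filter (fun p => c + 1 < ((Finset.range p).filter (fun s => s ∉ P)).card)
        = P.filter (fun p => n - 2 < p) := by
      apply Finset.filter_congr
      intro p hp
      have hpn : p ≠ n - 2 := fun h => hnmem (h ▸ hp)
      constructor
      · intro h
        by_contra h2
        have h3 : p ≤ n - 3 := by omega
        have := hfub p hp h3
        omega
      · intro h
        have := hflb p hp h
        omega
    rw [hfeq, hUcard]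
  -- z = c + 1
  have hanti : ∀ j j' : ℕ, j ≤ j' → knCol P j' ≤ knCol P j := by
    intro j j' hjj
    apply Finset.card_le_card
    intro i hi
    simp only [Finset.mem_filter, Finset.mem_range] at hi ⊢
    exact ⟨hi.1, by omega⟩
  have hzc : z = c + 1 := by
    rcases le_total z (c + 1) with h | h
    · have := hanti z (c + 1) h
      rw [hcolc, hcolz] at this
      omega
    · have := hanti (c + 1) z h
      rw [hcolc, hcolz] at this
      omega
  subst hzc
  -- the rows 1..c are the upper parts
  have hthr : ∀ i, i < P.card → (n - 2 < partDesc P i ↔ i < c + 1) := by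
    intro i hi
    rw [KNAux.threshold P (n - 2) hi, hUcard]
  have hIcoEq : Finset.Ico 1 (c + 1)
      = (Finset.range P.card).filter (fun i => n - 2 < partDesc P i ∧ partDesc P i ≠ M) := by
    ext i
    simp only [Finset.mem_Ico, Finset.mem_filter, Finset.mem_range]
    constructor
    · rintro ⟨h1, h2⟩
      have hic : i < P.card := by omega
      refine ⟨hic, (hthr i hic).mpr h2, ?_⟩
      have := KNAux.partDesc_strict P (show 0 < i by omega) hic
      rw [hpd0] at this
      omega
    · rintro ⟨h1, h2, h3⟩
      refine ⟨?_, (hthr i h1).mp h2⟩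
      rcases Nat.eq_zero_or_pos i with rfl | h4
      · exact absurd hpd0 h3
      · exact h4
  set SF := ∑ d ∈ D, ((Finset.range (M - d)).filter (fun s => s ∉ P)).card with hSFdef
  have himgEq : P.filter (fun p => n - 2 < p ∧ p ≠ M) = D.image (fun d => M - d) := by
    ext q
    simp only [Finset.mem_filter]
    constructor
    · rintro ⟨hq, hq2, hq3⟩
      have : q ∈ P.filter (fun p => n - 2 < p) := by
        simp only [Finset.mem_filter]; exact ⟨hq, hq2⟩
      rw [hUimg] at this
      simp only [Finset.mem_insert] at this
      tauto
    · intro hq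
      have h1 : q ∈ insert M (D.image (fun d => M - d)) := Finset.mem_insert_of_mem hq
      rw [← hUimg] at h1
      simp only [Finset.mem_filter] at h1
      refine ⟨h1.1, h1.2, ?_⟩
      intro h2
      exact hMnotimg (h2 ▸ hq)
  have hrowsum : ∑ i ∈ Finset.Ico 1 (c + 1), knRow P i = SF := by
    rw [hIcoEq]
    have ht := KNAux.sum_transfer P (fun p => n - 2 < p ∧ p ≠ M)
      (fun p => ((Finset.range p).filter (fun s => s ∉ P)).card)
    rw [himgEq, Finset.sum_image hinj] at ht
    simpa [knRow, hSFdef] using ht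
  -- per-row hook identity
  have e1 : (∑ i ∈ Finset.Ico 1 (c + 1), knHook P i (c + 1))
      + (∑ i ∈ Finset.Ico 1 (c + 1), (i + 1)) = SF := by
    rw [← hrowsum, ← Finset.sum_add_distrib]
    apply Finset.sum_congr rfl
    intro i hi
    simp only [Finset.mem_Ico] at hi
    have hic : i < P.card := by omega
    have hmem := KNAux.partDesc_mem P hic
    have hgt : n - 2 < partDesc P i := (hthr i hic).mpr (by omega)
    have hge := hflb (partDesc P i) hmem hgt
    have hrowge : c + 2 ≤ knRow P i := hge
    simp only [knHook, hcolc]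
    omega
  -- Gauss for the second sum
  have e2 : 2 * (∑ i ∈ Finset.Ico 1 (c + 1), (i + 1)) = (c + 1) * c + 2 * c := by
    have h1 : Finset.range (c + 1) = insert 0 (Finset.Ico 1 (c + 1)) := by
      ext x
      simp only [Finset.mem_range, Finset.mem_insert, Finset.mem_Ico]
      omega
    have h2 := Finset.sum_range_id_mul_two (c + 1)
    rw [h1, Finset.sum_insert (by simp)] at h2
    have h3 : ∑ i ∈ Finset.Ico 1 (c + 1), (i + 1)
        = (∑ i ∈ Finset.Ico 1 (c + 1), i) + c := by
      rw [Finset.sum_add_distrib, Finset.sum_const, Nat.card_Ico, smul_eq_mul]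
      omega
    simp only [Nat.add_sub_cancel] at h2
    omega
  -- counting for the upper rows
  have hgU : ∀ d ∈ D, ((Finset.range (M - d)).filter (fun s => s ∈ P)).card
      = IC.card + (D.filter (fun e => d < e)).card := by
    intro d hd
    obtain ⟨hd1, hd2, hd3⟩ := hDmem d hd
    have hset : (Finset.range (M - d)).filter (fun s => s ∈ P)
        = IC ∪ (D.filter (fun e => d < e)).image (fun e => M - e) := by
      ext q
      simp only [Finset.mem_filter, Finset.mem_range, Finset.mem_union, Finset.mem_image,
        hICdef, Finset.mem_Icc]
      constructor
      · rintro ⟨hq1, hq2⟩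
        by_cases hq3 : q ≤ n - 3
        · exact Or.inl ⟨⟨hpos q hq2, hq3⟩, hq2⟩
        · have hqn : q ≠ n - 2 := fun h => hnmem (h ▸ hq2)
          have hqgt : n - 2 < q := by omega
          have : q ∈ P.filter (fun p => n - 2 < p) := by
            simp only [Finset.mem_filter]; exact ⟨hq2, hqgt⟩
          rw [hUimg] at this
          simp only [Finset.mem_insert, Finset.mem_image] at this
          rcases this with rfl | ⟨e, he, rfl⟩
          · omega
          · obtain ⟨he1, he2, _⟩ := hDmem e he
            exact Or.inr ⟨e, ⟨he, by omega⟩, rfl⟩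
      · rintro (⟨⟨hq1, hq2⟩, hq3⟩ | ⟨e, ⟨he, hde⟩, rfl⟩)
        · exact ⟨by omega, hq3⟩
        · obtain ⟨he1, he2, _⟩ := hDmem e he
          exact ⟨by omega, hDP e he⟩
    rw [hset, Finset.card_union_of_disjoint, Finset.card_image_of_injOn]
    · intro a ha b hb hab
      exact hinj a (Finset.filter_subset _ _ ha) b (Finset.filter_subset _ _ hb) hab
    · rw [Finset.disjoint_left]
      intro a ha hb
      simp only [hICdef, Finset.mem_filter, Finset.mem_Icc] at ha
      simp only [Finset.mem_image, Finset.mem_filter] at hb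
      obtain ⟨e, ⟨he, _⟩, rfl⟩ := hb
      obtain ⟨he1, he2, _⟩ := hDmem e he
      omega
  have hfd : ∀ d ∈ D, ((Finset.range (M - d)).filter (fun s => s ∉ P)).card + d
      + (D.filter (fun e => d < e)).card + IC.card = M := by
    intro d hd
    obtain ⟨hd1, hd2, hd3⟩ := hDmem d hd
    have h1 := hfg (M - d)
    have h2 := hgU d hd
    have h3 : (D.filter (fun e => d < e)).card ≤ c := Finset.card_filter_le _ _
    omega
  set R := ∑ d ∈ D, (D.filter (fun e => d < e)).card with hRdef
  have e3 : SF + SD + R + c * IC.card = c * M := by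
    have h : ∑ d ∈ D, (((Finset.range (M - d)).filter (fun s => s ∉ P)).card + d
        + (D.filter (fun e => d < e)).card + IC.card) = D.card * M := by
      rw [Finset.sum_congr rfl (g := fun _ => M) (fun d hd => hfd d hd),
        Finset.sum_const, smul_eq_mul]
    rw [Finset.sum_add_distrib, Finset.sum_add_distrib, Finset.sum_add_distrib,
      Finset.sum_const, smul_eq_mul] at h
    rw [← hSFdef, ← hSDdef, ← hRdef, ← hcdef] at h
    exact h
  have e4 : 2 * R + c = c * c := by
    have htri : ∀ d ∈ D, (D.filter (fun e => d < e)).card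
        + (D.filter (fun e => e < d)).card + 1 = c := by
      intro d hd
      have hu : (D.filter (fun e => d < e)) ∪ ((D.filter (fun e => e < d)) ∪ {d}) = D := by
        ext q
        simp only [Finset.mem_union, Finset.mem_filter, Finset.mem_singleton]
        constructor
        · rintro (⟨hq, _⟩ | ⟨hq, _⟩ | rfl)
          · exact hq
          · exact hq
          · exact hd
        · intro hq
          rcases lt_trichotomy d q with h | h | h
          · exact Or.inl ⟨hq, h⟩
          · exact Or.inr (Or.inr h.symm)
          · exact Or.inr (Or.inl ⟨hq, h⟩)
      have hd1 : Disjoint (D.filter (fun e => d < e)) ((D.filter (fun e => e < d)) ∪ {d}) := by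
        rw [Finset.disjoint_left]
        intro a ha hb
        simp only [Finset.mem_filter] at ha
        simp only [Finset.mem_union, Finset.mem_filter, Finset.mem_singleton] at hb
        rcases hb with ⟨_, h⟩ | rfl
        · omega
        · omega
      have hd2 : Disjoint (D.filter (fun e => e < d)) ({d} : Finset ℕ) := by
        rw [Finset.disjoint_left]
        intro a ha hb
        simp only [Finset.mem_filter] at ha
        simp only [Finset.mem_singleton] at hb
        omega
      conv_rhs => rw [hcdef, ← hu]
      rw [Finset.card_union_of_disjoint hd1, Finset.card_union_of_disjoint hd2,
        Finset.card_singleton]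
      omega
    have hRR' : R = ∑ d ∈ D, (D.filter (fun e => e < d)).card := by
      rw [hRdef]
      simp only [Finset.card_filter]
      rw [Finset.sum_comm]
    have h : ∑ d ∈ D, ((D.filter (fun e => d < e)).card
        + (D.filter (fun e => e < d)).card + 1) = D.card * c := by
      rw [Finset.sum_congr rfl (g := fun _ => c) (fun d hd => htri d hd),
        Finset.sum_const, smul_eq_mul]
    rw [Finset.sum_add_distrib, Finset.sum_add_distrib, Finset.sum_const,
      smul_eq_mul, mul_one] at h
    rw [← hRdef, ← hRR', ← hcdef] at h
    omega
  -- final computation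
  have e3b : IC.card + c = n - 3 := hICcard
  set S := ∑ i ∈ Finset.Ico 1 (c + 1), knHook P i (c + 1) with hSdef
  set A := ∑ i ∈ Finset.Ico 1 (c + 1), (i + 1) with hAdef
  have e1z : (S : ℤ) + (A : ℤ) = (SF : ℤ) := by exact_mod_cast e1
  have e2z : 2 * (A : ℤ) = ((c : ℤ) + 1) * (c : ℤ) + 2 * (c : ℤ) := by exact_mod_cast e2
  have e3z : (SF : ℤ) + (SD : ℤ) + (R : ℤ) + (c : ℤ) * (IC.card : ℤ) = (c : ℤ) * (M : ℤ) := by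
    exact_mod_cast e3
  have e4z : 2 * (R : ℤ) + (c : ℤ) = (c : ℤ) * (c : ℤ) := by exact_mod_cast e4
  have e3bz : (IC.card : ℤ) + (c : ℤ) = (n : ℤ) - 3 := by
    have h : (IC.card : ℤ) + (c : ℤ) = ((n - 3 : ℕ) : ℤ) := by exact_mod_cast e3b
    have h2 : ((n - 3 : ℕ) : ℤ) = (n : ℤ) - 3 := by omega
    omega
  clear_value M D c IC SD SMD SF R S A
  have hfinal : 2 * (S : ℤ) = 2 * (k : ℤ) := by
    linear_combination 2 * e1z + 2 * e3z - e2z - e4z - 2 * key5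
      - 2 * (c : ℤ) * e3bz + 2 * (c : ℤ) * hMZ - 2 * (c : ℤ) * hnZ
  omega
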